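/- With S_n and R_n as above (coefficients of log(zG(z)) and of the compositional inverse of G, respectively), for every n ≥ 1: R_n = ∑_{l≥1} (1/l!) (−n+1)^{l−1} ∑_{k₁+⋯+k_l=n, k_i≥1} S_{k₁}⋯S_{k_l}. -/

import Mathlib

open Finset PowerSeries

/-- `compSum S l n = ∑_{k₁+⋯+k_l = n, kᵢ ≥ 1} S_{k₁} ⋯ S_{k_l}`. -/
noncomputable def compSum (S : ℕ → ℝ) (l n : ℕ) : ℝ :=
  ∑ c ∈ (Finset.Nat.antidiagonalTuple l n).filter (fun c => ∀ i, 1 ≤ c i),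
    ∏ i, S (c i)


/- ### Auxiliary lemmas -/

lemma aux_coeff_pow_tuple (φ : ℝ⟦X⟧) (l n : ℕ) :
    coeff n (φ ^ l) = ∑ c ∈ Finset.Nat.antidiagonalTuple l n, ∏ i, coeff (c i) φ := by
  rw [PowerSeries.coeff_pow]
  refine Finset.sum_nbij' (i := fun f => fun i : Fin l => f i.val)
    (j := fun c => Finsupp.onFinset (range l)
      (fun i => if h : i < l then c ⟨i, h⟩ else 0) ?_) ?_ ?_ ?_ ?_ ?_
  · intro i hi
    rw [mem_range]
    by_contra hmem
    simp [dif_neg hmem] at hi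
  · intro f hf
    rw [Finset.mem_finsuppAntidiag] at hf
    rw [Finset.Nat.mem_antidiagonalTuple, ← hf.1]
    exact (Finset.sum_range fun i => f i).symm
  · intro c hc
    rw [Finset.Nat.mem_antidiagonalTuple] at hc
    rw [Finset.mem_finsuppAntidiag]
    refine ⟨?_, Finsupp.support_onFinset_subset⟩
    change ∑ i ∈ range l, (if h : i < l then c ⟨i, h⟩ else 0) = n
    rw [Finset.sum_range (fun i => if h : i < l then c ⟨i, h⟩ else 0), ← hc]
    exact Finset.sum_congr rfl fun i _ => by simp [i.isLt]
  · intro f hf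
    rw [Finset.mem_finsuppAntidiag] at hf
    ext i
    simp only [Finsupp.onFinset_apply]
    by_cases h : i < l
    · simp [h]
    · rw [dif_neg h]
      by_contra hne
      have : i ∈ f.support := Finsupp.mem_support_iff.mpr fun h0 => hne h0.symm
      exact h (mem_range.mp (hf.2 this))
  · intro c hc
    ext i
    simp
  · intro f hf
    rw [Finset.prod_range fun i => coeff (f i) φ]

lemma aux_coeff_pow_zero {φ : ℝ⟦X⟧} (h : constantCoeff φ = 0) {j l : ℕ} (hj : j < l) :
    coeff j (φ ^ l) = 0 := by
  have : (X : ℝ⟦X⟧) ^ l ∣ φ ^ l := pow_dvd_pow_of_dvd (X_dvd_iff.mpr h) l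
  exact (X_pow_dvd_iff.mp this) j hj

noncomputable def expc (T : ℝ⟦X⟧) (c : ℝ) : ℝ⟦X⟧ :=
  PowerSeries.mk fun m => ∑ l ∈ range (m + 1), c ^ l / (Nat.factorial l) * coeff m (T ^ l)

lemma aux_coeff_mul_expc {T : ℝ⟦X⟧} (h : constantCoeff T = 0) (P : ℝ⟦X⟧) (c : ℝ) (m : ℕ) :
    coeff m (P * expc T c) =
      ∑ l ∈ range (m + 1), c ^ l / (Nat.factorial l) * coeff m (P * T ^ l) := by
  rw [PowerSeries.coeff_mul]
  have step : ∀ p ∈ antidiagonal m, coeff p.1 P * coeff p.2 (expc T c) =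
      ∑ l ∈ range (m + 1), c ^ l / (Nat.factorial l) * (coeff p.1 P * coeff p.2 (T ^ l)) := by
    rintro ⟨i, j⟩ hij
    rw [Finset.HasAntidiagonal.mem_antidiagonal] at hij
    simp only [expc, coeff_mk]
    rw [Finset.sum_subset (Finset.range_subset_range.mpr (by omega : j + 1 ≤ m + 1))
      (fun l _ hl => by
        rw [aux_coeff_pow_zero h (by simpa using hl : j < l), mul_zero])]
    rw [Finset.mul_sum]
    exact Finset.sum_congr rfl fun l _ => by ring
  rw [Finset.sum_congr rfl step, Finset.sum_comm]
  refine Finset.sum_congr rfl fun l _ => ?_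
  rw [PowerSeries.coeff_mul, Finset.mul_sum]

lemma aux_coeff_pow_mul_deriv (T : ℝ⟦X⟧) (l m : ℕ) :
    coeff m (T ^ l * d⁄dX ℝ T) * ((l : ℝ) + 1) = coeff (m + 1) (T ^ (l + 1)) * ((m : ℝ) + 1) := by
  have hD : d⁄dX ℝ (T ^ (l + 1)) = (l + 1) • (T ^ l * d⁄dX ℝ T) := by
    rw [Derivation.leibniz_pow]
    simp only [smul_eq_mul, Nat.add_sub_cancel]
  have h2 := PowerSeries.coeff_derivative (T ^ (l + 1)) m
  rw [hD, map_nsmul, nsmul_eq_mul] at h2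
  push_cast at h2
  linarith [h2]

lemma aux_deriv_expc {T : ℝ⟦X⟧} (h : constantCoeff T = 0) (c : ℝ) :
    d⁄dX ℝ (expc T c) = c • (d⁄dX ℝ T * expc T c) := by
  ext m
  rw [PowerSeries.coeff_derivative, map_smul, smul_eq_mul,
    aux_coeff_mul_expc h (d⁄dX ℝ T) c m]
  simp only [expc, coeff_mk]
  rw [Finset.sum_range_succ' (fun l => c ^ l / (Nat.factorial l) * coeff (m + 1) (T ^ l)) (m + 1)]
  simp
  rw [Finset.mul_sum, Finset.sum_mul]
  refine Finset.sum_congr rfl fun l _ => ?_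
  have key := aux_coeff_pow_mul_deriv T l m
  have hl1 : ((l : ℝ) + 1) ≠ 0 := by positivity
  have hfac : (Nat.factorial (l + 1) : ℝ) = ((l : ℝ) + 1) * Nat.factorial l := by
    rw [Nat.factorial_succ]; push_cast; ring
  have hfl : (Nat.factorial l : ℝ) ≠ 0 := Nat.cast_ne_zero.mpr (Nat.factorial_ne_zero l)
  rw [mul_comm (d⁄dX ℝ T) (T ^ l)] at *
  field_simp
  linear_combination (-(c ^ (l + 1)) * (Nat.factorial l : ℝ)) * key -
    (c ^ (l + 1) * coeff m (T ^ l * d⁄dX ℝ T)) * hfac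

lemma aux_ode_unique (U P Q : ℝ⟦X⟧) (c : ℝ)
    (hP : d⁄dX ℝ P = c • (U * P)) (hQ : d⁄dX ℝ Q = c • (U * Q))
    (h0 : coeff 0 P = coeff 0 Q) : P = Q := by
  ext m
  induction m using Nat.strong_induction_on with
  | _ m ih =>
    match m with
    | 0 => exact h0
    | m + 1 =>
      have e1 := PowerSeries.coeff_derivative P m
      have e2 := PowerSeries.coeff_derivative Q m
      rw [hP, map_smul, smul_eq_mul, PowerSeries.coeff_mul] at e1
      rw [hQ, map_smul, smul_eq_mul, PowerSeries.coeff_mul] at e2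
      have hsum : ∑ p ∈ antidiagonal m, coeff p.1 U * coeff p.2 P =
          ∑ p ∈ antidiagonal m, coeff p.1 U * coeff p.2 Q := by
        refine Finset.sum_congr rfl fun p hp => ?_
        rw [Finset.HasAntidiagonal.mem_antidiagonal] at hp
        rw [ih p.2 (by omega)]
      have h3 : coeff (m + 1) P * ((m : ℝ) + 1) = coeff (m + 1) Q * ((m : ℝ) + 1) := by
        rw [← e1, ← e2, hsum]
      exact mul_right_cancel₀ (by positivity : ((m : ℝ) + 1) ≠ 0) h3

lemma aux_residue (A C : ℝ⟦X⟧) (hAC : A * C = 1) {k n : ℕ} (hk1 : 1 ≤ k) (hkn : k ≤ n) :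
    coeff (n - 1) (d⁄dX ℝ ((X * A) ^ k) * C ^ n) = if k = n then (n : ℝ) else 0 := by
  have hpow : ∀ i j : ℕ, i ≤ j → A ^ i * C ^ j = C ^ (j - i) := by
    intro i j hij
    have h : C ^ j = C ^ i * C ^ (j - i) := by rw [← pow_add]; congr 1; omega
    rw [h, ← mul_assoc, ← mul_pow, hAC, one_pow, one_mul]
  have hDu : d⁄dX ℝ ((X * A) ^ k) =
      X ^ k * d⁄dX ℝ (A ^ k) + (k : ℕ) • (X ^ (k - 1) * A ^ k) := by
    rw [mul_pow, Derivation.leibniz]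
    have hDX : d⁄dX ℝ ((X : ℝ⟦X⟧) ^ k) = (k : ℕ) • X ^ (k - 1) := by
      rw [Derivation.leibniz_pow]
      simp
    rw [hDX, smul_eq_mul, smul_comm, smul_eq_mul]
    rw [nsmul_eq_mul, nsmul_eq_mul]
    ring
  rw [hDu, add_mul, map_add]
  rcases eq_or_lt_of_le hkn with rfl | hlt
  · -- k = n
    rw [if_pos rfl]
    have h1 : coeff (k - 1) (X ^ k * d⁄dX ℝ (A ^ k) * C ^ k) = 0 := by
      have hdvd : (X : ℝ⟦X⟧) ^ k ∣ X ^ k * d⁄dX ℝ (A ^ k) * C ^ k :=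
        Dvd.dvd.mul_right (Dvd.dvd.mul_right dvd_rfl _) _
      exact (X_pow_dvd_iff.mp hdvd) (k - 1) (by omega)
    have h2 : (k : ℕ) • (X ^ (k - 1) * A ^ k) * C ^ k = (k : ℕ) • (X : ℝ⟦X⟧) ^ (k - 1) := by
      rw [smul_mul_assoc, mul_assoc, hpow k k le_rfl]
      simp
    rw [h1, h2, zero_add, map_nsmul, PowerSeries.coeff_X_pow, if_pos rfl]
    simp
  · -- k < n
    rw [if_neg (by omega)]
    obtain ⟨q, rfl⟩ : ∃ q, n = k + (q + 1) := ⟨n - k - 1, by omega⟩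
    have hn1 : k + (q + 1) - 1 = q + k := by omega
    have hm : k + (q + 1) - k = q + 1 := by omega
    -- differential identities
    have hCA : C * A = 1 := by rw [mul_comm]; exact hAC
    have hDC : d⁄dX ℝ C = -(C * C * d⁄dX ℝ A) := by
      have h0 : A * d⁄dX ℝ C + C * d⁄dX ℝ A = 0 := by
        have := congrArg (d⁄dX ℝ) hAC
        rw [Derivation.leibniz, Derivation.map_one_eq_zero, smul_eq_mul, smul_eq_mul] at this
        exact this
      have h1 : d⁄dX ℝ C = C * (A * d⁄dX ℝ C) := by rw [← mul_assoc, hCA, one_mul]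
      rw [h1]
      have h2 : A * d⁄dX ℝ C = -(C * d⁄dX ℝ A) := by linear_combination h0
      rw [h2]; ring
    have hDAk : d⁄dX ℝ (A ^ k) = (k : ℕ) • (A ^ (k - 1) * d⁄dX ℝ A) := by
      rw [Derivation.leibniz_pow]
      simp only [smul_eq_mul, nsmul_eq_mul]
    have hCm1 : C ^ q * C * C = C ^ (q + 2) := by rw [← pow_succ, ← pow_succ]
    have hDCm : d⁄dX ℝ (C ^ (q + 1)) = -((q + 1 : ℕ) • (C ^ (q + 2) * d⁄dX ℝ A)) := by
      rw [Derivation.leibniz_pow, hDC]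
      simp only [smul_eq_mul, nsmul_eq_mul, Nat.add_sub_cancel]
      linear_combination (-((q : ℝ⟦X⟧) + 1) * d⁄dX ℝ A) * hCm1
    have hAkC : A ^ (k - 1) * d⁄dX ℝ A * C ^ (k + (q + 1)) = d⁄dX ℝ A * C ^ (q + 2) := by
      have h4 : A ^ (k - 1) * C ^ (k + (q + 1)) = C ^ (q + 2) := by
        rw [hpow (k - 1) (k + (q + 1)) (by omega)]
        congr 1; omega
      calc A ^ (k - 1) * d⁄dX ℝ A * C ^ (k + (q + 1))
          = d⁄dX ℝ A * (A ^ (k - 1) * C ^ (k + (q + 1))) := by ring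
        _ = d⁄dX ℝ A * C ^ (q + 2) := by rw [h4]
    have hkey : (q + 1 : ℕ) • (d⁄dX ℝ (A ^ k) * C ^ (k + (q + 1))) =
        -((k : ℕ) • d⁄dX ℝ (C ^ (q + 1))) := by
      rw [hDAk, hDCm]
      simp only [nsmul_eq_mul]
      push_cast
      linear_combination (((q : ℝ⟦X⟧) + 1) * (k : ℝ⟦X⟧)) * hAkC
    -- first term
    have e1 : coeff (k + (q + 1) - 1) (X ^ k * d⁄dX ℝ (A ^ k) * C ^ (k + (q + 1))) =
        coeff q (d⁄dX ℝ (A ^ k) * C ^ (k + (q + 1))) := by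
      rw [mul_assoc, hn1, PowerSeries.coeff_X_pow_mul]
    -- second term
    have e2 : coeff (k + (q + 1) - 1) ((k : ℕ) • (X ^ (k - 1) * A ^ k) * C ^ (k + (q + 1))) =
        (k : ℝ) * coeff (q + 1) (C ^ (q + 1)) := by
      rw [smul_mul_assoc, map_nsmul, mul_assoc, hpow k (k + (q + 1)) hkn, hm,
        show k + (q + 1) - 1 = (q + 1) + (k - 1) by omega, PowerSeries.coeff_X_pow_mul]
      simp
    -- coefficient of hkey
    have hc := congrArg (fun z => coeff q z) hkey
    simp only [map_neg, map_nsmul] at hc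
    simp only [nsmul_eq_mul] at hc
    have hder : coeff q (d⁄dX ℝ (C ^ (q + 1))) = coeff (q + 1) (C ^ (q + 1)) * ((q : ℝ) + 1) := by
      rw [PowerSeries.coeff_derivative]
    rw [hder] at hc
    have hq1 : ((q : ℝ) + 1) ≠ 0 := by positivity
    have e3 : coeff q (d⁄dX ℝ (A ^ k) * C ^ (k + (q + 1))) =
        -((k : ℝ) * coeff (q + 1) (C ^ (q + 1))) := by
      apply mul_left_cancel₀ hq1
      push_cast at hc
      linear_combination hc
    rw [e1, e2, e3]
    ring
lemma aux_DC (A C : ℝ⟦X⟧) (hAC : A * C = 1) : d⁄dX ℝ C = -(C * C * d⁄dX ℝ A) := by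
  have hCA : C * A = 1 := by rw [mul_comm]; exact hAC
  have h0 : A * d⁄dX ℝ C + C * d⁄dX ℝ A = 0 := by
    have := congrArg (d⁄dX ℝ) hAC
    rw [Derivation.leibniz, Derivation.map_one_eq_zero, smul_eq_mul, smul_eq_mul] at this
    exact this
  have h1 : d⁄dX ℝ C = C * (A * d⁄dX ℝ C) := by rw [← mul_assoc, hCA, one_mul]
  rw [h1, show A * d⁄dX ℝ C = -(C * d⁄dX ℝ A) by linear_combination h0]
  ring

/-- Formal version of `R_n = ∑_{l≥1} (1/l!) (−n+1)^{l−1} ∑_{k₁+⋯+k_l=n} S_{k₁}⋯S_{k_l}`.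
Here `A(w) = z·G(z)` (with `w = 1/z`) is a formal power series with constant term `1`,
`S_n` are the coefficients of `log(z·G(z)) = ∑ S_n wⁿ`, encoded by `A' = A·(∑ S_n wⁿ)'`,
and the free cumulants `R_n` are encoded by the compositional inverse relation
`A = 1 + ∑_{n≥1} R_n (w·A)^n`. -/
theorem R_in_terms_of_S (A : PowerSeries ℝ) (R S : ℕ → ℝ)
    (hA0 : coeff 0 A = 1)
    (hR : ∀ m : ℕ, coeff m A =
      (if m = 0 then 1 else 0) +
        ∑ n ∈ Finset.Icc 1 m, R n * coeff m ((X * A) ^ n))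
    (hS : ∀ m : ℕ, ((m : ℝ) + 1) * coeff (m + 1) A =
      coeff m (A * PowerSeries.mk fun n => ((n : ℝ) + 1) * S (n + 1))) :
    ∀ n : ℕ, 1 ≤ n →
      R n = ∑ l ∈ Finset.Icc 1 n,
        ((1 - (n : ℝ)) ^ (l - 1) / (Nat.factorial l)) * compSum S l n := by
  intro n hn
  obtain ⟨p, rfl⟩ : ∃ p, n = p + 1 := ⟨n - 1, by omega⟩
  -- the series T with T' = ∑ (n+1) S(n+1) Xⁿ
  set T : ℝ⟦X⟧ := PowerSeries.mk fun m => if m = 0 then 0 else S m with hTdef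
  have hTc : constantCoeff T = 0 := by
    rw [← coeff_zero_eq_constantCoeff_apply, hTdef, coeff_mk, if_pos rfl]
  have hT' : d⁄dX ℝ T = PowerSeries.mk fun m => ((m : ℝ) + 1) * S (m + 1) := by
    ext m
    rw [PowerSeries.coeff_derivative, hTdef, coeff_mk, coeff_mk, if_neg (Nat.succ_ne_zero m)]
    push_cast
    ring
  have hA' : d⁄dX ℝ A = A * d⁄dX ℝ T := by
    ext m
    rw [PowerSeries.coeff_derivative, hT', mul_comm]
    exact hS m
  -- the inverse of A
  set Ci : ℝ⟦X⟧ := A⁻¹ with hCidef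
  have hAC : A * Ci = 1 :=
    PowerSeries.mul_inv_cancel A (by rw [← coeff_zero_eq_constantCoeff_apply, hA0]; norm_num)
  have hccCi : constantCoeff Ci = 1 := by
    have := congrArg (constantCoeff) hAC
    rw [map_mul, map_one, ← coeff_zero_eq_constantCoeff_apply, hA0, one_mul] at this
    exact this
  -- `T` powers have coefficients `compSum`
  have hTpow : ∀ l N : ℕ, coeff N (T ^ l) = compSum S l N := by
    intro l N
    rw [aux_coeff_pow_tuple, compSum]
    refine Eq.trans (Finset.sum_subset (Finset.filter_subset (fun c : Fin l → ℕ => ∀ i, 1 ≤ c i) (Finset.Nat.antidiagonalTuple l N)) ?_).symm ?_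
    · intro c hc hnc
      rw [Finset.mem_filter, not_and] at hnc
      obtain ⟨i, hi⟩ := not_forall.mp (hnc hc)
      refine Finset.prod_eq_zero (Finset.mem_univ i) ?_
      rw [hTdef, coeff_mk, if_pos (by omega)]
    · refine Finset.sum_congr rfl fun c hc => ?_
      rw [Finset.mem_filter] at hc
      refine Finset.prod_congr rfl fun i _ => ?_
      rw [hTdef, coeff_mk, if_neg (by have := hc.2 i; omega)]
  -- Step A : p+1 times R (p+1) is a residue
  have hstepA : coeff p (d⁄dX ℝ A * Ci ^ (p + 1)) = R (p + 1) * ((p : ℝ) + 1) := by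
    set B : ℝ⟦X⟧ := 1 + ∑ k ∈ Icc 1 (p + 1), R k • (X * A) ^ k with hBdef
    have hABm : ∀ m, m ≤ p + 1 → coeff m A = coeff m B := by
      intro m hm
      rw [hR m, hBdef, map_add, map_sum, PowerSeries.coeff_one]
      congr 1
      · rw [Finset.sum_subset (Finset.Icc_subset_Icc_right hm) (fun k hk hk2 => ?_)]
        · exact Finset.sum_congr rfl fun k _ => by rw [map_smul, smul_eq_mul]
        · have hkm : m < k := by
            rw [Finset.mem_Icc] at hk
            rw [Finset.mem_Icc, not_and] at hk2
            omega
          rw [aux_coeff_pow_zero (by simp) hkm, mul_zero]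
    have hDAB : coeff p (d⁄dX ℝ A * Ci ^ (p + 1)) = coeff p (d⁄dX ℝ B * Ci ^ (p + 1)) := by
      rw [PowerSeries.coeff_mul, PowerSeries.coeff_mul]
      refine Finset.sum_congr rfl fun pr hpr => ?_
      rw [Finset.HasAntidiagonal.mem_antidiagonal] at hpr
      congr 1
      rw [PowerSeries.coeff_derivative, PowerSeries.coeff_derivative,
        hABm (pr.1 + 1) (by omega)]
    rw [hDAB, hBdef]
    rw [map_add, Derivation.map_one_eq_zero, zero_add, map_sum, Finset.sum_mul, map_sum]
    have : ∀ k ∈ Icc 1 (p + 1), coeff p (R k • d⁄dX ℝ ((X * A) ^ k) * Ci ^ (p + 1)) =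
        R k * (if k = p + 1 then ((p : ℝ) + 1) else 0) := by
      intro k hk
      rw [Finset.mem_Icc] at hk
      rw [smul_mul_assoc, map_smul, smul_eq_mul]
      congr 1
      have := aux_residue A Ci hAC hk.1 hk.2
      rw [Nat.add_sub_cancel] at this
      rw [this]
      congr 1
      push_cast
      ring
    simp only [Derivation.map_smul]
    rw [Finset.sum_congr rfl this]
    rw [Finset.sum_eq_single_of_mem (p + 1) (by simp) (fun b _ hb => by rw [if_neg hb, mul_zero])]
    rw [if_pos rfl]
  -- Step B : rewrite the residue via T
  have hBC : d⁄dX ℝ A * Ci ^ (p + 1) = d⁄dX ℝ T * Ci ^ p := by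
    rw [hA', pow_succ]
    calc A * d⁄dX ℝ T * (Ci ^ p * Ci) = d⁄dX ℝ T * Ci ^ p * (A * Ci) := by ring
      _ = d⁄dX ℝ T * Ci ^ p := by rw [hAC, mul_one]
  -- Step C : Ci ^ p is the exponential of -p T
  have hDCi : d⁄dX ℝ Ci = -(d⁄dX ℝ T * Ci) := by
    have hCA : Ci * A = 1 := by rw [mul_comm]; exact hAC
    rw [aux_DC A Ci hAC, hA']
    linear_combination (-(Ci * d⁄dX ℝ T)) * hCA
  have hDCp : d⁄dX ℝ (Ci ^ p) = (-(p : ℝ)) • (d⁄dX ℝ T * Ci ^ p) := by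
    rcases Nat.eq_zero_or_pos p with rfl | hp
    · simp
    · have hCp1 : Ci ^ (p - 1) * Ci = Ci ^ p := by
        rw [← pow_succ]
        congr 1
        omega
      rw [Derivation.leibniz_pow, hDCi]
      simp only [smul_eq_mul, nsmul_eq_mul]
      rw [PowerSeries.smul_eq_C_mul, map_neg, map_natCast]
      linear_combination (-((p : ℕ) : ℝ⟦X⟧) * d⁄dX ℝ T) * hCp1
  have hCp : Ci ^ p = expc T (-(p : ℝ)) := by
    refine aux_ode_unique (d⁄dX ℝ T) _ _ (-(p : ℝ)) hDCp (aux_deriv_expc hTc _) ?_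
    rw [coeff_zero_eq_constantCoeff_apply, map_pow, hccCi, one_pow]
    rw [show coeff 0 (expc T (-(p : ℝ))) = 1 by simp [expc]]
  -- Step D : expand the exponential
  have hD : R (p + 1) * ((p : ℝ) + 1) =
      ∑ l ∈ range (p + 1), (-(p : ℝ)) ^ l / (Nat.factorial l) * coeff p (d⁄dX ℝ T * T ^ l) := by
    rw [← hstepA, hBC, hCp, aux_coeff_mul_expc hTc]
  have hterm : ∀ l : ℕ, (-(p : ℝ)) ^ l / (Nat.factorial l) * coeff p (d⁄dX ℝ T * T ^ l) =
      (-(p : ℝ)) ^ l / (Nat.factorial (l + 1)) * compSum S (l + 1) (p + 1) * ((p : ℝ) + 1) := by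
    intro l
    have key := aux_coeff_pow_mul_deriv T l p
    rw [hTpow (l + 1) (p + 1)] at key
    have hfac : (Nat.factorial (l + 1) : ℝ) = ((l : ℝ) + 1) * Nat.factorial l := by
      rw [Nat.factorial_succ]; push_cast; ring
    have hfl : (Nat.factorial l : ℝ) ≠ 0 := Nat.cast_ne_zero.mpr (Nat.factorial_ne_zero l)
    have hfl1 : (Nat.factorial (l + 1) : ℝ) ≠ 0 := Nat.cast_ne_zero.mpr (Nat.factorial_ne_zero _)
    have hl1 : ((l : ℝ) + 1) ≠ 0 := by positivity
    rw [mul_comm (d⁄dX ℝ T) (T ^ l), mul_assoc, ← key, hfac]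
    field_simp
  have hp1 : ((p : ℝ) + 1) ≠ 0 := by positivity
  have hmain : R (p + 1) =
      ∑ l ∈ range (p + 1), (-(p : ℝ)) ^ l / (Nat.factorial (l + 1)) * compSum S (l + 1) (p + 1) := by
    apply mul_right_cancel₀ hp1
    rw [hD, Finset.sum_congr rfl fun l _ => hterm l, Finset.sum_mul]
  rw [hmain]
  -- reindex the sum
  rw [show Icc 1 (p + 1) = Ico 1 (p + 2) by rw [← Finset.Ico_add_one_right_eq_Icc]; rfl]
  rw [Finset.sum_Ico_eq_sum_range]
  rw [show p + 2 - 1 = p + 1 by omega]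
  refine Finset.sum_congr rfl fun i _ => ?_
  rw [show 1 + i - 1 = i by omega, show 1 + i = i + 1 by omega]
  congr 2
  push_cast
  ring
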